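/- Let (X, ρ, μ) be a metric measure space with μ(B(x,r)) ≤ c r^α for all x ∈ X, r > 0, for constants c, α > 0. Let d > 0 and ν be a d-regular signed measure, i.e. |ν|(B(x,r)) ≤ c'(μ(B(x,r)) + d^α) for all x, r. Let g₁ : [0,∞) → [0,∞) be nonincreasing. Then for any L > 0, r > 0, x ∈ X: L^α ∫_{ρ(x,y) > r} g₁(L ρ(x,y)) d|ν|(y) ≤ C (c + (d/r)^α) ∫_{rL/2}^∞ g₁(u) u^{α−1} du, where C depends only on α and c'. -/

import Mathlib

open MeasureTheory
open scoped ENNReal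

lemma key_lintegral_le {X : Type} [MeasurableSpace X] (ν : Measure X) (s : Set X)
    (f : X → ℝ≥0∞) (K : ℝ≥0∞) (h : ∀ y ∈ s, f y ≤ K) :
    ∫⁻ y in s, f y ∂ν ≤ K * ν s := by
  rw [MeasureTheory.lintegral]
  refine iSup₂_le fun φ hφ => ?_
  rw [SimpleFunc.lintegral]
  have hsum : ∀ t : Finset ℝ≥0∞,
      ∑ x ∈ t, ν (φ ⁻¹' {x} ∩ s) ≤ ν s := by
    intro t
    have H : ∀ t : Finset ℝ≥0∞, ∑ x ∈ t, ν (φ ⁻¹' {x} ∩ s) ≤ ν (s ∩ ⋃ x ∈ t, φ ⁻¹' {x}) := by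
      intro t
      induction t using Finset.induction with
      | empty => simp
      | @insert a t' hx ih =>
        rw [Finset.sum_insert hx]
        have hmeas : MeasurableSet (φ ⁻¹' {a}) := φ.measurableSet_fiber a
        set T := s ∩ ⋃ x ∈ insert a t', φ ⁻¹' {x} with hT
        have h1 : φ ⁻¹' {a} ∩ s ⊆ T ∩ φ ⁻¹' {a} := by
          intro y hy
          exact ⟨⟨hy.2, Set.mem_biUnion (Finset.mem_insert_self a t') hy.1⟩, hy.1⟩
        have h2 : s ∩ ⋃ x ∈ t', φ ⁻¹' {x} ⊆ T \ φ ⁻¹' {a} := by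
          intro y hy
          obtain ⟨hys, hyU⟩ := hy
          simp only [Set.mem_iUnion] at hyU
          obtain ⟨x, hxt, hyx⟩ := hyU
          refine ⟨⟨hys, Set.mem_biUnion (Finset.mem_insert_of_mem hxt) hyx⟩, ?_⟩
          intro hya
          have h3 : φ y = x := hyx
          have h4 : φ y = a := hya
          exact hx (by rw [← h4, h3]; exact hxt)
        calc ν (φ ⁻¹' {a} ∩ s) + ∑ x ∈ t', ν (φ ⁻¹' {x} ∩ s)
            ≤ ν (T ∩ φ ⁻¹' {a}) + ν (T \ φ ⁻¹' {a}) :=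
              add_le_add (measure_mono h1) (le_trans (ih) (measure_mono h2))
          _ = ν T := measure_inter_add_diff T hmeas
    exact le_trans (H t) (measure_mono Set.inter_subset_left)
  calc ∑ x ∈ φ.range, x * ν.restrict s (φ ⁻¹' {x})
      = ∑ x ∈ φ.range, x * ν (φ ⁻¹' {x} ∩ s) := by
        refine Finset.sum_congr rfl fun x _ => ?_
        rw [Measure.restrict_apply (φ.measurableSet_fiber x)]
    _ ≤ ∑ x ∈ φ.range, K * ν (φ ⁻¹' {x} ∩ s) := by
        refine Finset.sum_le_sum fun x _ => ?_
        rcases Set.eq_empty_or_nonempty (φ ⁻¹' {x} ∩ s) with he | ⟨y, hy⟩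
        · simp [he]
        · have hxy : φ y = x := hy.1
          exact mul_le_mul_left (hxy ▸ le_trans (hφ y) (h y hy.2)) _
    _ = K * ∑ x ∈ φ.range, ν (φ ⁻¹' {x} ∩ s) := by rw [Finset.mul_sum]
    _ ≤ K * ν s := mul_le_mul_right (hsum _) _

theorem stmt_8 (α cprime : ℝ) (hα : 0 < α) (hcprime : 0 < cprime) :
    ∃ C : ℝ, 0 < C ∧
      ∀ (X : Type) [MetricSpace X] [MeasurableSpace X],
        ∀ (μ ν : Measure X) (c d L r : ℝ) (x : X) (g₁ : ℝ → ℝ),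
        0 < c → 0 < d → 0 < L → 0 < r →
        (∀ (z : X) (s : ℝ), 0 < s → μ (Metric.closedBall z s) ≤ ENNReal.ofReal (c * s ^ α)) →
        (∀ (z : X) (s : ℝ), 0 < s →
          ν (Metric.closedBall z s) ≤
            ENNReal.ofReal (cprime * ((μ (Metric.closedBall z s)).toReal + d ^ α))) →
        (∀ u v : ℝ, 0 ≤ u → u ≤ v → g₁ v ≤ g₁ u) → (∀ u, 0 ≤ g₁ u) →
        ENNReal.ofReal (L ^ α) *
            ∫⁻ y in {y : X | r < dist x y}, ENNReal.ofReal (g₁ (L * dist x y)) ∂ν ≤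
          ENNReal.ofReal (C * (c + (d / r) ^ α)) *
            ∫⁻ u in Set.Ioi (r * L / 2), ENNReal.ofReal (g₁ u * u ^ (α - 1)) := by
  classical
  set mα : ℝ := min 1 ((2:ℝ) ^ (α - 1)) with hmα
  have hmα_pos : 0 < mα := lt_min one_pos (Real.rpow_pos_of_pos two_pos _)
  have h2α_pos : (0:ℝ) < (2:ℝ) ^ α := Real.rpow_pos_of_pos two_pos _
  refine ⟨cprime * ((2:ℝ) ^ α * (2:ℝ) ^ α) / mα, by positivity, ?_⟩
  intro X _ _ μ ν c d L r x g₁ hc hd hL hr hμ hν hg₁mono hg₁nonneg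
  set C : ℝ := cprime * ((2:ℝ) ^ α * (2:ℝ) ^ α) / mα with hC
  set q : ℝ := (d / r) ^ α with hq
  have hq_nonneg : 0 ≤ q := by rw [hq]; exact Real.rpow_nonneg (by positivity) _
  set b : ℝ := r * L / 2 with hb
  have hb_pos : 0 < b := by rw [hb]; positivity
  have hT : (1:ℝ) ≤ (2:ℝ) ^ α := Real.one_le_rpow one_le_two hα.le
  -- annuli
  set A : ℕ → Set X := fun R =>
    {y | (2:ℝ) ^ R * r < dist x y ∧ dist x y ≤ (2:ℝ) ^ (R + 1) * r} with hA
  have hcover : {y : X | r < dist x y} ⊆ ⋃ R, A R := by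
    intro y hy
    have hy' : r < dist x y := hy
    have hex : ∃ n : ℕ, dist x y ≤ (2:ℝ) ^ (n + 1) * r := by
      obtain ⟨n, hn⟩ := pow_unbounded_of_one_lt (dist x y / r) (one_lt_two (α := ℝ))
      refine ⟨n, ?_⟩
      rw [div_lt_iff₀ hr] at hn
      have h2 : (2:ℝ) ^ n ≤ (2:ℝ) ^ (n + 1) := pow_le_pow_right₀ one_le_two (by omega)
      nlinarith
    refine Set.mem_iUnion.2 ⟨Nat.find hex, ?_, Nat.find_spec hex⟩
    cases hN : Nat.find hex with
    | zero => simpa using hy'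
    | succ m =>
      have hmin := Nat.find_min hex (m := m) (by omega)
      push_neg at hmin
      simpa using hmin
  -- per annulus bound
  have hannulus : ∀ R : ℕ, ∫⁻ y in A R, ENNReal.ofReal (g₁ (L * dist x y)) ∂ν ≤
      ENNReal.ofReal (g₁ (L * ((2:ℝ) ^ R * r))) *
        ENNReal.ofReal (cprime * (c * ((2:ℝ) ^ (R + 1) * r) ^ α + d ^ α)) := by
    intro R
    have h1 : ∫⁻ y in A R, ENNReal.ofReal (g₁ (L * dist x y)) ∂ν ≤
        ENNReal.ofReal (g₁ (L * ((2:ℝ) ^ R * r))) * ν (A R) := by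
      apply key_lintegral_le
      intro y hy
      apply ENNReal.ofReal_le_ofReal
      exact hg₁mono _ _ (by positivity) (mul_le_mul_of_nonneg_left hy.1.le hL.le)
    refine h1.trans (mul_le_mul_right ?_ _)
    have hs_pos : (0:ℝ) < (2:ℝ) ^ (R + 1) * r := by positivity
    have hsub : A R ⊆ Metric.closedBall x ((2:ℝ) ^ (R + 1) * r) := by
      intro y hy
      rw [Metric.mem_closedBall, dist_comm]
      exact hy.2
    refine (measure_mono hsub).trans ((hν x _ hs_pos).trans ?_)
    apply ENNReal.ofReal_le_ofReal
    have hμtr : (μ (Metric.closedBall x ((2:ℝ) ^ (R + 1) * r))).toReal ≤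
        c * ((2:ℝ) ^ (R + 1) * r) ^ α :=
      ENNReal.toReal_le_of_le_ofReal (by positivity) (hμ x _ hs_pos)
    exact mul_le_mul_of_nonneg_left (add_le_add_left hμtr _) hcprime.le
  -- intervals
  set I : ℕ → Set ℝ := fun R => Set.Ioc ((2:ℝ) ^ R * b) ((2:ℝ) ^ (R + 1) * b) with hI
  have hIsub : ∀ R : ℕ, I R ⊆ Set.Ioi b := by
    intro R u hu
    have h1 : (1:ℝ) ≤ (2:ℝ) ^ R := one_le_pow₀ one_le_two
    have : b ≤ (2:ℝ) ^ R * b := le_mul_of_one_le_left hb_pos.le h1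
    exact lt_of_le_of_lt this hu.1
  have hIdisj : Pairwise (Function.onFun Disjoint I) := by
    have key : ∀ m n : ℕ, m < n → Disjoint (I m) (I n) := by
      intro m n hmn
      refine Set.disjoint_left.2 fun u hum hun => ?_
      have h1 : u ≤ (2:ℝ) ^ (m + 1) * b := hum.2
      have h2 : (2:ℝ) ^ n * b < u := hun.1
      have h3 : (2:ℝ) ^ (m + 1) ≤ (2:ℝ) ^ n := pow_le_pow_right₀ one_le_two (by omega)
      nlinarith
    intro m n hmn
    rcases hmn.lt_or_gt with h | h
    · exact key m n h
    · exact (key n m h).symm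
  -- per interval lower bound
  have hlow : ∀ R : ℕ,
      ENNReal.ofReal (g₁ (L * ((2:ℝ) ^ R * r)) * (mα * ((2:ℝ) ^ R * b) ^ (α - 1))) *
        ENNReal.ofReal ((2:ℝ) ^ R * b) ≤
      ∫⁻ u in I R, ENNReal.ofReal (g₁ u * u ^ (α - 1)) := by
    intro R
    have hxpos : (0:ℝ) < (2:ℝ) ^ R * b := by positivity
    have haR : (2:ℝ) ^ (R + 1) * b = L * ((2:ℝ) ^ R * r) := by
      rw [hb, pow_succ]; ring
    have hpt : ∀ u ∈ I R,
        ENNReal.ofReal (g₁ (L * ((2:ℝ) ^ R * r)) * (mα * ((2:ℝ) ^ R * b) ^ (α - 1))) ≤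
        ENNReal.ofReal (g₁ u * u ^ (α - 1)) := by
      intro u hu
      have hu1 : (2:ℝ) ^ R * b < u := hu.1
      have hu2 : u ≤ (2:ℝ) ^ (R + 1) * b := hu.2
      have hupos : (0:ℝ) < u := lt_trans hxpos hu1
      apply ENNReal.ofReal_le_ofReal
      have hg : g₁ (L * ((2:ℝ) ^ R * r)) ≤ g₁ u := by
        have := hg₁mono u ((2:ℝ) ^ (R + 1) * b) hupos.le hu2
        rwa [haR] at this
      have hpow : mα * ((2:ℝ) ^ R * b) ^ (α - 1) ≤ u ^ (α - 1) := by
        rcases le_or_gt 1 α with h1 | h1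
        · have h2 : ((2:ℝ) ^ R * b) ^ (α - 1) ≤ u ^ (α - 1) :=
            Real.rpow_le_rpow hxpos.le hu1.le (by linarith)
          calc mα * ((2:ℝ) ^ R * b) ^ (α - 1)
              ≤ 1 * ((2:ℝ) ^ R * b) ^ (α - 1) :=
                mul_le_mul_of_nonneg_right (min_le_left _ _) (Real.rpow_nonneg hxpos.le _)
            _ = ((2:ℝ) ^ R * b) ^ (α - 1) := one_mul _
            _ ≤ u ^ (α - 1) := h2
        · have h2 : ((2:ℝ) ^ (R + 1) * b) ^ (α - 1) ≤ u ^ (α - 1) :=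
            Real.rpow_le_rpow_of_nonpos hupos hu2 (by linarith)
          have h3 : ((2:ℝ) ^ (R + 1) * b) ^ (α - 1) =
              (2:ℝ) ^ (α - 1) * ((2:ℝ) ^ R * b) ^ (α - 1) := by
            rw [show (2:ℝ) ^ (R + 1) * b = 2 * ((2:ℝ) ^ R * b) by rw [pow_succ]; ring,
              Real.mul_rpow (by norm_num) hxpos.le]
          calc mα * ((2:ℝ) ^ R * b) ^ (α - 1)
              ≤ (2:ℝ) ^ (α - 1) * ((2:ℝ) ^ R * b) ^ (α - 1) :=
                mul_le_mul_of_nonneg_right (min_le_right _ _) (Real.rpow_nonneg hxpos.le _)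
            _ = ((2:ℝ) ^ (R + 1) * b) ^ (α - 1) := h3.symm
            _ ≤ u ^ (α - 1) := h2
      exact mul_le_mul hg hpow
        (mul_nonneg hmα_pos.le (Real.rpow_nonneg hxpos.le _)) (hg₁nonneg u)
    calc ENNReal.ofReal (g₁ (L * ((2:ℝ) ^ R * r)) * (mα * ((2:ℝ) ^ R * b) ^ (α - 1))) *
          ENNReal.ofReal ((2:ℝ) ^ R * b)
        = ENNReal.ofReal (g₁ (L * ((2:ℝ) ^ R * r)) * (mα * ((2:ℝ) ^ R * b) ^ (α - 1))) *
          volume (I R) := by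
          rw [hI]
          simp only [Real.volume_Ioc]
          rw [show (2:ℝ) ^ (R + 1) * b - (2:ℝ) ^ R * b = (2:ℝ) ^ R * b by rw [pow_succ]; ring]
      _ = ∫⁻ _ in I R,
            ENNReal.ofReal (g₁ (L * ((2:ℝ) ^ R * r)) * (mα * ((2:ℝ) ^ R * b) ^ (α - 1))) :=
          (setLIntegral_const _ _).symm
      _ ≤ ∫⁻ u in I R, ENNReal.ofReal (g₁ u * u ^ (α - 1)) :=
          setLIntegral_mono' measurableSet_Ioc hpt
  -- termwise comparison
  have hterm : ∀ R : ℕ,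
      ENNReal.ofReal (L ^ α) * (ENNReal.ofReal (g₁ (L * ((2:ℝ) ^ R * r))) *
        ENNReal.ofReal (cprime * (c * ((2:ℝ) ^ (R + 1) * r) ^ α + d ^ α))) ≤
      ENNReal.ofReal (C * (c + q)) *
        (ENNReal.ofReal (g₁ (L * ((2:ℝ) ^ R * r)) * (mα * ((2:ℝ) ^ R * b) ^ (α - 1))) *
          ENNReal.ofReal ((2:ℝ) ^ R * b)) := by
    intro R
    have hxpos : (0:ℝ) < (2:ℝ) ^ R * b := by positivity
    rw [← ENNReal.ofReal_mul (hg₁nonneg _), ← ENNReal.ofReal_mul (by positivity),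
      ← ENNReal.ofReal_mul (mul_nonneg (hg₁nonneg _)
        (mul_nonneg hmα_pos.le (Real.rpow_nonneg hxpos.le _))),
      ← ENNReal.ofReal_mul (by positivity)]
    apply ENNReal.ofReal_le_ofReal
    have hcore : L ^ α * (cprime * (c * ((2:ℝ) ^ (R + 1) * r) ^ α + d ^ α)) ≤
        C * (c + q) * (mα * (((2:ℝ) ^ R * b) ^ (α - 1) * ((2:ℝ) ^ R * b))) := by
      have e2 : ((2:ℝ) ^ R * b) ^ (α - 1) * ((2:ℝ) ^ R * b) = ((2:ℝ) ^ R * b) ^ α := by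
        rw [Real.rpow_sub hxpos, Real.rpow_one]
        field_simp
      have e3 : ((2:ℝ) ^ R * b) ^ α = ((2:ℝ) ^ R) ^ α * b ^ α :=
        Real.mul_rpow (by positivity) hb_pos.le
      have e4 : b ^ α = r ^ α * L ^ α / (2:ℝ) ^ α := by
        rw [hb, show r * L / 2 = (r * L) / 2 from rfl,
          Real.div_rpow (by positivity) (by norm_num), Real.mul_rpow hr.le hL.le]
      have e1 : ((2:ℝ) ^ (R + 1) * r) ^ α = (2:ℝ) ^ α * (((2:ℝ) ^ R) ^ α * r ^ α) := by
        rw [show (2:ℝ) ^ (R + 1) * r = 2 * ((2:ℝ) ^ R * r) by rw [pow_succ]; ring,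
          Real.mul_rpow (by norm_num) (by positivity),
          Real.mul_rpow (by positivity) hr.le]
      have e5 : d ^ α = q * r ^ α := by
        rw [hq, ← Real.mul_rpow (by positivity) hr.le, div_mul_cancel₀ _ (ne_of_gt hr)]
      have hCm : C * mα = cprime * ((2:ℝ) ^ α * (2:ℝ) ^ α) := by
        rw [hC]
        exact div_mul_cancel₀ _ hmα_pos.ne'
      rw [e2, e3, e4, e1, e5]
      set P := ((2:ℝ) ^ R) ^ α with hP'
      have hP : 1 ≤ P := Real.one_le_rpow (one_le_pow₀ one_le_two) hα.le
      have hrα : (0:ℝ) < r ^ α := Real.rpow_pos_of_pos hr _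
      have hLα : (0:ℝ) < L ^ α := Real.rpow_pos_of_pos hL _
      have hRHSeq : C * (c + q) * (mα * (P * (r ^ α * L ^ α / (2:ℝ) ^ α))) =
          cprime * (2:ℝ) ^ α * (c + q) * P * r ^ α * L ^ α := by
        have h0 : ((2:ℝ) ^ α) ≠ 0 := h2α_pos.ne'
        calc C * (c + q) * (mα * (P * (r ^ α * L ^ α / (2:ℝ) ^ α)))
            = (C * mα) * ((c + q) * (P * (r ^ α * L ^ α / (2:ℝ) ^ α))) := by ring
          _ = cprime * ((2:ℝ) ^ α * (2:ℝ) ^ α) *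
              ((c + q) * (P * (r ^ α * L ^ α / (2:ℝ) ^ α))) := by rw [hCm]
          _ = cprime * (2:ℝ) ^ α * (c + q) * P * r ^ α * L ^ α := by
              field_simp
      rw [hRHSeq]
      have hTP : 1 ≤ (2:ℝ) ^ α * P := by nlinarith
      nlinarith [mul_nonneg (mul_nonneg (mul_nonneg (mul_nonneg hcprime.le hrα.le) hLα.le)
        hq_nonneg) (sub_nonneg.2 hTP)]
    calc L ^ α * (g₁ (L * ((2:ℝ) ^ R * r)) *
          (cprime * (c * ((2:ℝ) ^ (R + 1) * r) ^ α + d ^ α)))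
        = g₁ (L * ((2:ℝ) ^ R * r)) *
          (L ^ α * (cprime * (c * ((2:ℝ) ^ (R + 1) * r) ^ α + d ^ α))) := by ring
      _ ≤ g₁ (L * ((2:ℝ) ^ R * r)) *
          (C * (c + q) * (mα * (((2:ℝ) ^ R * b) ^ (α - 1) * ((2:ℝ) ^ R * b)))) :=
          mul_le_mul_of_nonneg_left hcore (hg₁nonneg _)
      _ = C * (c + q) * (g₁ (L * ((2:ℝ) ^ R * r)) * (mα * ((2:ℝ) ^ R * b) ^ (α - 1)) *
          ((2:ℝ) ^ R * b)) := by ring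
  -- assemble
  calc ENNReal.ofReal (L ^ α) *
        ∫⁻ y in {y : X | r < dist x y}, ENNReal.ofReal (g₁ (L * dist x y)) ∂ν
      ≤ ENNReal.ofReal (L ^ α) *
        ∑' R : ℕ, (ENNReal.ofReal (g₁ (L * ((2:ℝ) ^ R * r))) *
          ENNReal.ofReal (cprime * (c * ((2:ℝ) ^ (R + 1) * r) ^ α + d ^ α))) := by
        refine mul_le_mul_right ?_ _
        refine (lintegral_mono_set hcover).trans ?_
        exact (lintegral_iUnion_le _ _).trans (ENNReal.tsum_le_tsum hannulus)
    _ = ∑' R : ℕ, ENNReal.ofReal (L ^ α) * (ENNReal.ofReal (g₁ (L * ((2:ℝ) ^ R * r))) *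
          ENNReal.ofReal (cprime * (c * ((2:ℝ) ^ (R + 1) * r) ^ α + d ^ α))) :=
        ENNReal.tsum_mul_left.symm
    _ ≤ ∑' R : ℕ, ENNReal.ofReal (C * (c + q)) *
          (ENNReal.ofReal (g₁ (L * ((2:ℝ) ^ R * r)) * (mα * ((2:ℝ) ^ R * b) ^ (α - 1))) *
            ENNReal.ofReal ((2:ℝ) ^ R * b)) := ENNReal.tsum_le_tsum hterm
    _ = ENNReal.ofReal (C * (c + q)) *
        ∑' R : ℕ, (ENNReal.ofReal (g₁ (L * ((2:ℝ) ^ R * r)) *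
          (mα * ((2:ℝ) ^ R * b) ^ (α - 1))) * ENNReal.ofReal ((2:ℝ) ^ R * b)) :=
        ENNReal.tsum_mul_left
    _ ≤ ENNReal.ofReal (C * (c + q)) *
        ∫⁻ u in Set.Ioi b, ENNReal.ofReal (g₁ u * u ^ (α - 1)) := by
        refine mul_le_mul_right ?_ _
        refine (ENNReal.tsum_le_tsum hlow).trans ?_
        rw [← lintegral_iUnion (fun R => measurableSet_Ioc) hIdisj]
        exact lintegral_mono_set (Set.iUnion_subset hIsub)
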